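/- Let $p(n) \uparrow \infty$ be an increasing sequence with $p(n) \geq 1$, and let $\Lambda = \{\lambda_n\}$ be a nondecreasing sequence of positive reals with $\lambda_1 > 1$. If the inclusion $BV^{\#}(p(n) \uparrow \infty) \subset \Lambda^{\#}BV$ holds, then $\sum_{n=1}^\infty 1/\lambda_n < \infty$ (equivalently, $\Lambda^{\#}BV$ equals the class of all bounded functions on $[0,1]^2$). -/

import Mathlib

/-- A finite collection of `m` nonoverlapping open subintervals `(a i, b i)` of `[0,1]`. -/
def Nonoverlap (m : ℕ) (a b : ℕ → ℝ) : Prop :=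
  (∀ i < m, 0 ≤ a i ∧ a i < b i ∧ b i ≤ 1) ∧
  ∀ i < m, ∀ j < m, i ≠ j → Set.Ioo (a i) (b i) ∩ Set.Ioo (a j) (b j) = ∅

/-- `Λ^{#}V_1(f) ≤ M`: all Waterman-type sums in the first variable, with a separate
point `y i` for each interval, are bounded by `M`. -/
def LamSharpV1 (lam : ℕ → ℝ) (f : ℝ → ℝ → ℝ) (M : ℝ) : Prop :=
  ∀ (m : ℕ) (a b y : ℕ → ℝ), Nonoverlap m a b → (∀ i < m, y i ∈ Set.Icc (0:ℝ) 1) →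
    ∑ i ∈ Finset.range m, |f (b i) (y i) - f (a i) (y i)| / lam i ≤ M

/-- `Λ^{#}V_2(f) ≤ M`: the symmetric condition in the second variable. -/
def LamSharpV2 (lam : ℕ → ℝ) (f : ℝ → ℝ → ℝ) (M : ℝ) : Prop :=
  ∀ (m : ℕ) (a b x : ℕ → ℝ), Nonoverlap m a b → (∀ i < m, x i ∈ Set.Icc (0:ℝ) 1) →
    ∑ i ∈ Finset.range m, |f (x i) (b i) - f (x i) (a i)| / lam i ≤ M

/-- The class `Λ^{#}BV`. -/
def LamSharpBV (lam : ℕ → ℝ) (f : ℝ → ℝ → ℝ) : Prop :=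
  ∃ M : ℝ, LamSharpV1 lam f M ∧ LamSharpV2 lam f M

/-- `V_1^{#}(f, p(n) ↑ ∞) ≤ M`: for every `n`, every collection of nonoverlapping
intervals of lengths at least `2⁻ⁿ` and every choice of points `y i`, the `ℓ^{p(n)}`
sum of increments in the first variable is at most `M`. -/
def BVSharpV1 (p : ℕ → ℝ) (f : ℝ → ℝ → ℝ) (M : ℝ) : Prop :=
  ∀ (n m : ℕ) (a b y : ℕ → ℝ), Nonoverlap m a b →
    (∀ i < m, 1 / 2 ^ n ≤ b i - a i) →
    (∀ i < m, y i ∈ Set.Icc (0:ℝ) 1) →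
    (∑ i ∈ Finset.range m, |f (b i) (y i) - f (a i) (y i)| ^ p n) ^ (1 / p n) ≤ M

/-- `V_2^{#}(f, p(n) ↑ ∞) ≤ M`: the symmetric condition in the second variable. -/
def BVSharpV2 (p : ℕ → ℝ) (f : ℝ → ℝ → ℝ) (M : ℝ) : Prop :=
  ∀ (n m : ℕ) (a b x : ℕ → ℝ), Nonoverlap m a b →
    (∀ i < m, 1 / 2 ^ n ≤ b i - a i) →
    (∀ i < m, x i ∈ Set.Icc (0:ℝ) 1) →
    (∑ i ∈ Finset.range m, |f (x i) (b i) - f (x i) (a i)| ^ p n) ^ (1 / p n) ≤ M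

/-- The class `BV^{#}(p(n) ↑ ∞)`. -/
def BVSharp (p : ℕ → ℝ) (f : ℝ → ℝ → ℝ) : Prop :=
  ∃ M : ℝ, BVSharpV1 p f M ∧ BVSharpV2 p f M

open Finset

noncomputable section CorAux

/-- the `j`-th spike site on level `n` -/
def site (r c : ℕ → ℕ) (n j : ℕ) : ℝ :=
  2⁻¹ ^ (n + 1) + ((j % c n : ℕ) + 1) * 2⁻¹ ^ (r n + c n)

open Classical in
/-- level of a point (meaningful only on sites) -/
def lev (r c : ℕ → ℕ) (x : ℝ) : ℕ :=
  if h : ∃ q : ℕ × ℕ, site r c q.1 q.2 = x then h.choose.1 else 0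

open Classical in
/-- the spike function -/
def g (r c : ℕ → ℕ) (x : ℝ) : ℝ :=
  if ∃ q : ℕ × ℕ, site r c q.1 q.2 = x then 2⁻¹ ^ (lev r c x + 1) else 0

/-- the two-variable counterexample function -/
def F (r c : ℕ → ℕ) (x y : ℝ) : ℝ :=
  if Int.fract x = Int.fract y then g r c (Int.fract x) else 0

variable {r c : ℕ → ℕ}

lemma site_gt (n j : ℕ) : 2⁻¹ ^ (n + 1) < site r c n j := by
  have h : (0:ℝ) < ((j % c n : ℕ) + 1) * 2⁻¹ ^ (r n + c n) := by positivity
  unfold site; linarith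

lemma site_ge (n j : ℕ) : 2⁻¹ ^ (n + 1) + 2⁻¹ ^ (r n + c n) ≤ site r c n j := by
  unfold site
  have h1 : (1:ℝ) ≤ ((j % c n : ℕ) + 1) := by
    have : (0:ℝ) ≤ ((j % c n : ℕ) : ℝ) := Nat.cast_nonneg _
    linarith
  have h2 : (0:ℝ) < 2⁻¹ ^ (r n + c n) := by positivity
  nlinarith

lemma offset_le (hc : ∀ n, 0 < c n) (n j : ℕ) :
    (((j % c n : ℕ) : ℝ) + 1) * 2⁻¹ ^ (r n + c n) ≤ 2⁻¹ ^ (r n) := by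
  have h1 : ((j % c n : ℕ) : ℝ) + 1 ≤ (c n : ℝ) := by
    have := Nat.mod_lt j (hc n)
    exact_mod_cast Nat.succ_le_of_lt this
  have h2 : (c n : ℝ) ≤ 2 ^ (c n) := by exact_mod_cast (Nat.lt_two_pow_self (n := c n)).le
  have h3 : ((2:ℝ)⁻¹) ^ (r n + c n) = 2⁻¹ ^ (r n) * 2⁻¹ ^ (c n) := pow_add _ _ _
  have h5 : ((2:ℝ)) ^ (c n) * 2⁻¹ ^ (c n) = 1 := by
    rw [inv_pow, mul_inv_cancel₀ (by positivity)]
  calc (((j % c n : ℕ) : ℝ) + 1) * 2⁻¹ ^ (r n + c n)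
      ≤ (2:ℝ) ^ (c n) * 2⁻¹ ^ (r n + c n) :=
        mul_le_mul_of_nonneg_right (h1.trans h2) (by positivity)
    _ = 2⁻¹ ^ (r n) * ((2:ℝ) ^ (c n) * 2⁻¹ ^ (c n)) := by rw [h3]; ring
    _ = 2⁻¹ ^ (r n) := by rw [h5, mul_one]

lemma site_ub (hc : ∀ n, 0 < c n) (n j : ℕ) :
    site r c n j ≤ 2⁻¹ ^ (n + 1) + 2⁻¹ ^ (r n) := by
  have h1 := offset_le (r := r) hc n j
  unfold site; linarith

lemma site_le (hc : ∀ n, 0 < c n) (hr : ∀ n, n + 3 ≤ r n) (n j : ℕ) :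
    site r c n j ≤ 2⁻¹ ^ (n + 1) + 2⁻¹ ^ (n + 3) := by
  have h1 := site_ub (r := r) hc n j
  have h2 : ((2:ℝ)⁻¹) ^ (r n) ≤ 2⁻¹ ^ (n + 3) :=
    pow_le_pow_of_le_one (by norm_num) (by norm_num) (hr n)
  linarith

lemma site_mem (hc : ∀ n, 0 < c n) (hr : ∀ n, n + 3 ≤ r n) (n j : ℕ) :
    0 < site r c n j ∧ site r c n j < 1 := by
  constructor
  · have h0 : (0:ℝ) < 2⁻¹ ^ (n+1) := by positivity
    linarith [site_gt (r := r) (c := c) n j]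
  · have h := site_le hc hr n j
    have h1 : ((2:ℝ)⁻¹) ^ (n+1) ≤ 2⁻¹ ^ 1 :=
      pow_le_pow_of_le_one (by norm_num) (by norm_num) (by omega)
    have h2 : ((2:ℝ)⁻¹) ^ (n+3) ≤ 2⁻¹ ^ 3 :=
      pow_le_pow_of_le_one (by norm_num) (by norm_num) (by omega)
    norm_num at h1 h2
    linarith

lemma site_lt_site (hc : ∀ n, 0 < c n) (hr : ∀ n, n + 3 ≤ r n) {n n' j j' : ℕ}
    (h : n < n') : site r c n' j' < site r c n j := by
  have h1 := site_le hc hr n' j'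
  have h2 := site_gt (r := r) (c := c) n j
  have e1 : ((2:ℝ)⁻¹) ^ (n'+1) ≤ 2⁻¹ ^ (n+2) :=
    pow_le_pow_of_le_one (by norm_num) (by norm_num) (by omega)
  have e2 : ((2:ℝ)⁻¹) ^ (n'+3) ≤ 2⁻¹ ^ (n+2) :=
    pow_le_pow_of_le_one (by norm_num) (by norm_num) (by omega)
  have e3 : ((2:ℝ)⁻¹) ^ (n+2) + 2⁻¹ ^ (n+2) = 2⁻¹ ^ (n+1) := by
    rw [pow_succ]; ring
  linarith

lemma level_eq (hc : ∀ n, 0 < c n) (hr : ∀ n, n + 3 ≤ r n) {n n' j j' : ℕ}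
    (h : site r c n j = site r c n' j') : n = n' := by
  rcases lt_trichotomy n n' with hlt | heq | hgt
  · exact absurd h (ne_of_gt (site_lt_site hc hr hlt))
  · exact heq
  · exact absurd h (ne_of_lt (site_lt_site hc hr hgt))

lemma lev_site (hc : ∀ n, 0 < c n) (hr : ∀ n, n + 3 ≤ r n) (n j : ℕ) :
    lev r c (site r c n j) = n := by
  unfold lev
  rw [dif_pos ⟨(n, j), rfl⟩]
  exact level_eq hc hr
    (Exists.choose_spec (⟨(n, j), rfl⟩ : ∃ q : ℕ × ℕ, site r c q.1 q.2 = site r c n j))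

lemma g_site (hc : ∀ n, 0 < c n) (hr : ∀ n, n + 3 ≤ r n) (n j : ℕ) :
    g r c (site r c n j) = 2⁻¹ ^ (n + 1) := by
  unfold g
  rw [if_pos ⟨(n, j), rfl⟩, lev_site hc hr]

lemma g_nonneg (x : ℝ) : 0 ≤ g r c x := by
  unfold g; split
  · positivity
  · exact le_refl 0

lemma g_eq_zero {x : ℝ} (h : ∀ n j : ℕ, site r c n j ≠ x) : g r c x = 0 := by
  unfold g
  rw [if_neg]
  rintro ⟨q, hq⟩
  exact h q.1 q.2 hq

lemma g_repr (hc : ∀ n, 0 < c n) {x : ℝ} (h : g r c x ≠ 0) :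
    ∃ n j : ℕ, j < c n ∧ site r c n j = x := by
  rcases Classical.em (∃ q : ℕ × ℕ, site r c q.1 q.2 = x) with ⟨⟨n, j⟩, hq⟩ | hne
  · refine ⟨n, j % c n, Nat.mod_lt _ (hc n), ?_⟩
    have hmm : (j % c n) % c n = j % c n := Nat.mod_mod_of_dvd j dvd_rfl
    have : site r c n (j % c n) = site r c n j := by
      unfold site; rw [hmm]
    rw [this]; exact hq
  · exact absurd (g_eq_zero fun n j hs => hne ⟨(n, j), hs⟩) h

lemma g_lev (hc : ∀ n, 0 < c n) (hr : ∀ n, n + 3 ≤ r n) {x : ℝ} (h : g r c x ≠ 0) :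
    g r c x = 2⁻¹ ^ (lev r c x + 1) := by
  obtain ⟨n, j, _, hs⟩ := g_repr hc h
  rw [← hs, g_site hc hr, lev_site hc hr]

lemma g_fract (hc : ∀ n, 0 < c n) (hr : ∀ n, n + 3 ≤ r n) {t : ℝ} (h0 : 0 ≤ t) (h1 : t ≤ 1) :
    g r c (Int.fract t) = g r c t := by
  rcases lt_or_eq_of_le h1 with hlt | heq
  · rw [Int.fract_eq_self.2 ⟨h0, hlt⟩]
  · subst heq
    rw [show Int.fract (1:ℝ) = 0 by norm_num [Int.fract]]
    rw [g_eq_zero (fun n j hs => (ne_of_gt (site_mem hc hr n j).1) hs),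
        g_eq_zero (fun n j hs => (ne_of_lt (site_mem hc hr n j).2) hs)]

/-- separation of endpoints of nonoverlapping interval families -/
lemma sep_or {m : ℕ} {a b : ℕ → ℝ} (hno : Nonoverlap m a b) :
    ∀ i < m, ∀ j < m, i ≠ j → b i ≤ a j ∨ b j ≤ a i := by
  intro i hi j hj hij
  by_contra hcon
  push_neg at hcon
  obtain ⟨h1, h2⟩ := hcon
  obtain ⟨hai, haibi, _⟩ := hno.1 i hi
  obtain ⟨haj, hajbj, _⟩ := hno.1 j hj
  have hdisj := hno.2 i hi j hj hij
  rw [Set.Ioo_inter_Ioo] at hdisj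
  have hne : (Set.Ioo (a i ⊔ a j) (b i ⊓ b j)).Nonempty := by
    apply Set.nonempty_Ioo.2
    simp only [sup_lt_iff, lt_inf_iff]
    exact ⟨⟨haibi, h1⟩, ⟨h2, hajbj⟩⟩
  rw [hdisj] at hne
  exact Set.not_nonempty_empty hne

lemma sep_left {k m : ℕ} {a b : ℕ → ℝ} (hno : Nonoverlap m a b)
    (hlen : ∀ i < m, 1 / 2 ^ k ≤ b i - a i) :
    ∀ i < m, ∀ j < m, i ≠ j → 1 / 2 ^ k ≤ |a i - a j| := by
  have hpow : (0:ℝ) < 1 / 2 ^ k := by positivity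
  intro i hi j hj hij
  rcases sep_or hno i hi j hj hij with h | h
  · have := hlen i hi
    rw [abs_sub_comm, abs_of_nonneg (by linarith)]
    linarith
  · have := hlen j hj
    rw [abs_of_nonneg (by linarith)]
    linarith

lemma sep_right {k m : ℕ} {a b : ℕ → ℝ} (hno : Nonoverlap m a b)
    (hlen : ∀ i < m, 1 / 2 ^ k ≤ b i - a i) :
    ∀ i < m, ∀ j < m, i ≠ j → 1 / 2 ^ k ≤ |b i - b j| := by
  have hpow : (0:ℝ) < 1 / 2 ^ k := by positivity
  intro i hi j hj hij
  rcases sep_or hno i hi j hj hij with h | h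
  · have := hlen j hj
    rw [abs_sub_comm, abs_of_nonneg (by linarith)]
    linarith
  · have := hlen i hi
    rw [abs_of_nonneg (by linarith)]
    linarith

/-- Core counting lemma: the `p k`-sum of spike values over `2⁻ᵏ`-separated points
is at most 1. -/
lemma sum_g_le {p : ℕ → ℝ} (hp1 : ∀ n, 1 ≤ p n) (hpm : Monotone p)
    (hc : ∀ n, 0 < c n) (hr : ∀ n, n + 3 ≤ r n)
    (hpc : ∀ n, (c n : ℝ) + 1 ≤ p (r n))
    (k m : ℕ) (x : ℕ → ℝ)
    (hsep : ∀ i < m, ∀ j < m, i ≠ j → 1 / 2 ^ k ≤ |x i - x j|) :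
    ∑ i ∈ Finset.range m, g r c (x i) ^ p k ≤ 1 := by
  classical
  have hq1 : 1 ≤ p k := hp1 k
  have hq0 : p k ≠ 0 := by linarith
  set T : Finset ℕ := (range m).filter (fun i => g r c (x i) ≠ 0) with hT
  have hmem : ∀ i ∈ T, i ∈ range m := fun i hi => (Finset.mem_filter.1 hi).1
  have hgne : ∀ i ∈ T, g r c (x i) ≠ 0 := fun i hi => (Finset.mem_filter.1 hi).2
  have hsum : ∑ i ∈ range m, g r c (x i) ^ p k = ∑ i ∈ T, g r c (x i) ^ p k := by
    symm
    apply Finset.sum_subset (Finset.filter_subset _ _)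
    intro i hir hni
    have hg0 : g r c (x i) = 0 := by
      by_contra hg
      exact hni (Finset.mem_filter.2 ⟨hir, hg⟩)
    rw [hg0, Real.zero_rpow hq0]
  rw [hsum,
    ← Finset.sum_fiberwise_of_maps_to (g := fun i => lev r c (x i))
      (t := T.image fun i => lev r c (x i))
      (fun i hi => Finset.mem_image_of_mem _ hi)]
  have hrepr : ∀ i ∈ T, ∃ j, j < c (lev r c (x i)) ∧ site r c (lev r c (x i)) j = x i := by
    intro i hi
    obtain ⟨n, j, hj, hs⟩ := g_repr hc (hgne i hi)
    have hl : lev r c (x i) = n := by rw [← hs, lev_site hc hr]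
    rw [hl]; exact ⟨j, hj, hs⟩
  calc ∑ n ∈ T.image (fun i => lev r c (x i)),
        ∑ i ∈ T.filter (fun i => lev r c (x i) = n), g r c (x i) ^ p k
      ≤ ∑ n ∈ T.image (fun i => lev r c (x i)), (2⁻¹:ℝ) ^ (n+1) := by
        apply Finset.sum_le_sum
        intro n _
        have hfib : ∀ i ∈ T.filter (fun i => lev r c (x i) = n),
            g r c (x i) ^ p k = ((2⁻¹:ℝ) ^ (n+1)) ^ p k := by
          intro i hi
          obtain ⟨hiT, hlev⟩ := Finset.mem_filter.1 hi
          rw [g_lev hc hr (hgne i hiT), hlev]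
        rw [Finset.sum_congr rfl hfib, Finset.sum_const, nsmul_eq_mul]
        set B : ℝ := 2⁻¹ ^ (n+1) with hB
        have hB0 : (0:ℝ) < B := by rw [hB]; positivity
        have hB1 : B ≤ 1 := by
          rw [hB]
          exact pow_le_one₀ (by norm_num) (by norm_num)
        set Fib := T.filter (fun i => lev r c (x i) = n) with hFib
        have hfibsite : ∀ i ∈ Fib, ∃ j, j < c n ∧ site r c n j = x i := by
          intro i hi
          obtain ⟨hiT, hlev⟩ := Finset.mem_filter.1 hi
          obtain ⟨j, hj, hs⟩ := hrepr i hiT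
          rw [hlev] at hj hs
          exact ⟨j, hj, hs⟩
        rcases lt_or_ge k (r n) with hk | hk
        · -- coarse scale : at most one point in the level-n cluster
          have hcard : Fib.card ≤ 1 := by
            rw [Finset.card_le_one]
            intro i hi i' hi'
            by_contra hne
            obtain ⟨j, hj, hs⟩ := hfibsite i hi
            obtain ⟨j', hj', hs'⟩ := hfibsite i' hi'
            have hlo := site_ge (r := r) (c := c) n j
            have hhi := site_ub (r := r) hc n j
            have hlo' := site_ge (r := r) (c := c) n j'
            have hhi' := site_ub (r := r) hc n j'
            have hdist : |x i - x i'| ≤ 2⁻¹ ^ (r n) - 2⁻¹ ^ (r n + c n) := by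
              rw [← hs, ← hs', abs_le]
              constructor <;> linarith
            have hsep' := hsep i (Finset.mem_range.1 (hmem i (Finset.mem_filter.1 hi).1))
              i' (Finset.mem_range.1 (hmem i' (Finset.mem_filter.1 hi').1)) hne
            have h1 : ((2:ℝ)⁻¹) ^ (r n) ≤ 2⁻¹ ^ (k+1) :=
              pow_le_pow_of_le_one (by norm_num) (by norm_num) (by omega)
            have h2 : ((2:ℝ)⁻¹) ^ (k+1) = (1/2^k) * 2⁻¹ := by
              rw [pow_succ, inv_pow, one_div]
            have h3 : (0:ℝ) < 1/2^k := by positivity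
            have h4 : (0:ℝ) < 2⁻¹ ^ (r n + c n) := by positivity
            linarith
          have hBk : B ^ p k ≤ B := by
            have := Real.rpow_le_rpow_of_exponent_ge hB0 hB1 hq1
            rwa [Real.rpow_one] at this
          have hcast : (Fib.card : ℝ) ≤ 1 := by exact_mod_cast hcard
          calc (Fib.card : ℝ) * B ^ p k ≤ 1 * B :=
                mul_le_mul hcast hBk (Real.rpow_nonneg hB0.le _) (by norm_num)
            _ = B := one_mul B
        · -- fine scale : at most `c n` points, but the height is tiny
          have hcard : Fib.card ≤ c n := by
            have hmaps : ∀ i ∈ Fib, x i ∈ (range (c n)).image (fun j => site r c n j) := by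
              intro i hi
              obtain ⟨j, hj, hs⟩ := hfibsite i hi
              exact Finset.mem_image.2 ⟨j, Finset.mem_range.2 hj, hs⟩
            have hinj : Set.InjOn (fun i => x i) ↑Fib := by
              intro i hi i' hi' hxx
              by_contra hne
              have hsep' := hsep i (Finset.mem_range.1 (hmem i (Finset.mem_filter.1 hi).1))
                i' (Finset.mem_range.1 (hmem i' (Finset.mem_filter.1 hi').1)) hne
              have hxx' : x i = x i' := hxx
              rw [hxx', sub_self, abs_zero] at hsep'
              have : (0:ℝ) < 1/2^k := by positivity
              linarith
            calc Fib.card ≤ ((range (c n)).image (fun j => site r c n j)).card :=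
                  Finset.card_le_card_of_injOn _ hmaps hinj
              _ ≤ (range (c n)).card := Finset.card_image_le
              _ = c n := Finset.card_range _
          have hqc : (c n : ℝ) + 1 ≤ p k := (hpc n).trans (hpm hk)
          have e1 : B ^ p k = (2⁻¹:ℝ) ^ (((n+1:ℕ):ℝ) * p k) := by
            rw [Real.rpow_mul (by norm_num : (0:ℝ) ≤ 2⁻¹), Real.rpow_natCast]
          have e2 : ((n+1:ℕ):ℝ) + ((c n : ℕ):ℝ) ≤ ((n+1:ℕ):ℝ) * p k := by
            push_cast
            have hn0 : (0:ℝ) ≤ (n:ℝ) := Nat.cast_nonneg n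
            nlinarith
          have e3 : (2⁻¹:ℝ) ^ (((n+1:ℕ):ℝ) * p k) ≤ 2⁻¹ ^ (((n+1:ℕ):ℝ) + ((c n : ℕ):ℝ)) :=
            Real.rpow_le_rpow_of_exponent_ge (by norm_num) (by norm_num) e2
          have e4 : (2⁻¹:ℝ) ^ (((n+1:ℕ):ℝ) + ((c n : ℕ):ℝ)) = B * 2⁻¹ ^ (c n) := by
            rw [Real.rpow_add (by norm_num : (0:ℝ) < 2⁻¹), Real.rpow_natCast, Real.rpow_natCast]
          have hBq : B ^ p k ≤ B * 2⁻¹ ^ (c n) := by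
            rw [e1]; rw [e4] at e3; exact e3
          have hfin : (c n : ℝ) * 2⁻¹ ^ (c n) ≤ 1 := by
            have h2 : (c n : ℝ) ≤ 2 ^ (c n) := by exact_mod_cast (Nat.lt_two_pow_self (n := c n)).le
            rw [inv_pow, ← div_eq_mul_inv, div_le_one (by positivity)]
            exact h2
          calc (Fib.card : ℝ) * B ^ p k ≤ (c n : ℝ) * (B * 2⁻¹ ^ (c n)) := by
                apply mul_le_mul (by exact_mod_cast hcard) hBq
                  (Real.rpow_nonneg hB0.le _) (Nat.cast_nonneg _)
            _ = B * ((c n : ℝ) * 2⁻¹ ^ (c n)) := by ring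
            _ ≤ B * 1 := mul_le_mul_of_nonneg_left hfin hB0.le
            _ = B := mul_one B
    _ ≤ 1 := by
        set s := T.image (fun i => lev r c (x i)) with hs
        have hsub : s ⊆ range (s.sup id + 1) := by
          intro n hn
          exact Finset.mem_range.2 (Nat.lt_succ_of_le (Finset.le_sup (f := id) hn))
        calc ∑ n ∈ s, (2⁻¹:ℝ)^(n+1)
            ≤ ∑ n ∈ range (s.sup id + 1), (2⁻¹:ℝ)^(n+1) :=
              Finset.sum_le_sum_of_subset_of_nonneg hsub (fun i _ _ => by positivity)
          _ ≤ 1 := by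
            have h := sum_geometric_two_le (s.sup id + 1)
            have e : ∑ n ∈ range (s.sup id + 1), (2⁻¹:ℝ)^(n+1)
                = 2⁻¹ * ∑ n ∈ range (s.sup id + 1), (2⁻¹:ℝ)^n := by
              rw [Finset.mul_sum]
              apply Finset.sum_congr rfl
              intro i _
              rw [pow_succ]; ring
            rw [e]
            have h2 : ∑ n ∈ range (s.sup id + 1), (2⁻¹:ℝ)^n ≤ 2 := by
              simpa [one_div] using h
            linarith

/-- Main variation bound for the counterexample function. -/
lemma mainV {p : ℕ → ℝ} (hp1 : ∀ n, 1 ≤ p n) (hpm : Monotone p)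
    (hc : ∀ n, 0 < c n) (hr : ∀ n, n + 3 ≤ r n)
    (hpc : ∀ n, (c n : ℝ) + 1 ≤ p (r n))
    (k m : ℕ) (a b w : ℕ → ℝ) (hno : Nonoverlap m a b)
    (hlen : ∀ i < m, 1 / 2 ^ k ≤ b i - a i) :
    ∑ i ∈ Finset.range m, |F r c (b i) (w i) - F r c (a i) (w i)| ^ p k ≤ 2 := by
  have key : ∀ i < m, |F r c (b i) (w i) - F r c (a i) (w i)|
      ≤ max (g r c (a i)) (g r c (b i)) := by
    intro i hi
    obtain ⟨ha0, hab, hb1⟩ := hno.1 i hi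
    have ha1 : a i ≤ 1 := le_trans hab.le hb1
    have hb0 : 0 ≤ b i := le_trans ha0 hab.le
    have hga := g_fract hc hr ha0 ha1
    have hgb := g_fract hc hr hb0 hb1
    unfold F
    by_cases h1 : Int.fract (b i) = Int.fract (w i)
    · by_cases h2 : Int.fract (a i) = Int.fract (w i)
      · rw [if_pos h1, if_pos h2, show Int.fract (b i) = Int.fract (a i) from h1.trans h2.symm,
          sub_self, abs_zero]
        exact le_max_of_le_left (g_nonneg _)
      · rw [if_pos h1, if_neg h2, sub_zero, hgb, abs_of_nonneg (g_nonneg _)]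
        exact le_max_right _ _
    · by_cases h2 : Int.fract (a i) = Int.fract (w i)
      · rw [if_neg h1, if_pos h2, zero_sub, abs_neg, hga, abs_of_nonneg (g_nonneg _)]
        exact le_max_left _ _
      · rw [if_neg h1, if_neg h2, sub_zero, abs_zero]
        exact le_max_of_le_left (g_nonneg _)
  have hq0 : (0:ℝ) ≤ p k := by linarith [hp1 k]
  calc ∑ i ∈ Finset.range m, |F r c (b i) (w i) - F r c (a i) (w i)| ^ p k
      ≤ ∑ i ∈ Finset.range m, (g r c (a i) ^ p k + g r c (b i) ^ p k) := by
        apply Finset.sum_le_sum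
        intro i hi
        have h1 : |F r c (b i) (w i) - F r c (a i) (w i)| ^ p k
            ≤ (max (g r c (a i)) (g r c (b i))) ^ p k :=
          Real.rpow_le_rpow (abs_nonneg _) (key i (Finset.mem_range.1 hi)) hq0
        refine h1.trans ?_
        rcases max_cases (g r c (a i)) (g r c (b i)) with ⟨hm, _⟩ | ⟨hm, _⟩
        · rw [hm]; exact le_add_of_nonneg_right (Real.rpow_nonneg (g_nonneg _) _)
        · rw [hm]; exact le_add_of_nonneg_left (Real.rpow_nonneg (g_nonneg _) _)
    _ = (∑ i ∈ Finset.range m, g r c (a i) ^ p k)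
        + ∑ i ∈ Finset.range m, g r c (b i) ^ p k := Finset.sum_add_distrib
    _ ≤ 1 + 1 := add_le_add
        (sum_g_le hp1 hpm hc hr hpc k m a (sep_left hno hlen))
        (sum_g_le hp1 hpm hc hr hpc k m b (sep_right hno hlen))
    _ = 2 := by norm_num

lemma root_le {S q : ℝ} (hS0 : 0 ≤ S) (hS : S ≤ 2) (hq : 1 ≤ q) : S ^ (1/q) ≤ 2 := by
  have hq0 : 0 < q := lt_of_lt_of_le one_pos hq
  have h2 : S ≤ (2:ℝ) ^ q := by
    have h := Real.rpow_le_rpow_of_exponent_le (by norm_num : (1:ℝ) ≤ 2) hq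
    rw [Real.rpow_one] at h
    linarith
  calc S ^ (1/q) ≤ ((2:ℝ) ^ q) ^ (1/q) := Real.rpow_le_rpow hS0 h2 (by positivity)
    _ = 2 := by
      rw [← Real.rpow_mul (by norm_num), mul_one_div_cancel (ne_of_gt hq0), Real.rpow_one]

lemma F_symm (x y : ℝ) : F r c x y = F r c y x := by
  unfold F
  rcases eq_or_ne (Int.fract x) (Int.fract y) with h | h
  · rw [if_pos h, if_pos h.symm, h]
  · rw [if_neg h, if_neg (Ne.symm h)]

lemma F_per (x y : ℝ) : F r c (x+1) y = F r c x y ∧ F r c x (y+1) = F r c x y := by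
  constructor <;> · unfold F; simp [Int.fract_add_one]

end CorAux

/-- Corollary: if `BV^{#}(p(n) ↑ ∞) ⊆ Λ^{#}BV` (for 1-periodic
functions), then `∑ 1/λ_n < ∞`. -/
theorem summable_of_bvSharp_subset_lamSharpBV
    (p : ℕ → ℝ) (hp1 : ∀ n, 1 ≤ p n) (hpmono : Monotone p)
    (hptop : Filter.Tendsto p Filter.atTop Filter.atTop)
    (lam : ℕ → ℝ) (hmono : Monotone lam) (hlam1 : 1 < lam 0)
    (hincl : ∀ f : ℝ → ℝ → ℝ,
      (∀ x y : ℝ, f (x + 1) y = f x y ∧ f x (y + 1) = f x y) →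
      BVSharp p f → LamSharpBV lam f) :
    Summable (fun n => 1 / lam n) := by
  by_contra hns
  have hlampos : ∀ i, (0:ℝ) < lam i :=
    fun i => lt_trans one_pos (lt_of_lt_of_le hlam1 (hmono (Nat.zero_le i)))
  have hterm : ∀ i, 0 ≤ 1 / lam i := fun i => div_nonneg (by norm_num) (hlampos i).le
  have htend := (not_summable_iff_tendsto_nat_atTop_of_nonneg hterm).1 hns
  have hc_ex : ∀ n : ℕ, ∃ m : ℕ, 0 < m ∧
      ((n:ℝ)+1) * 2^(n+1) ≤ ∑ i ∈ Finset.range m, 1/lam i := by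
    intro n
    have h1 := htend.eventually_ge_atTop (((n:ℝ)+1) * 2^(n+1))
    obtain ⟨m, hm⟩ := (h1.and (Filter.eventually_ge_atTop 1)).exists
    exact ⟨m, hm.2, hm.1⟩
  choose c hc0 hcS using hc_ex
  have hr_ex : ∀ n : ℕ, ∃ R : ℕ, n + 3 ≤ R ∧ (c n : ℝ) + 1 ≤ p R := by
    intro n
    have h1 := hptop.eventually_ge_atTop ((c n : ℝ)+1)
    obtain ⟨R, hR⟩ := ((Filter.eventually_ge_atTop (n+3)).and h1).exists
    exact ⟨R, hR.1, hR.2⟩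
  choose r hr3 hpc using hr_ex
  have hBV : BVSharp p (F r c) := by
    refine ⟨2, ?_, ?_⟩
    · intro k m a b y hno hlen hy
      exact root_le (Finset.sum_nonneg fun i _ => Real.rpow_nonneg (abs_nonneg _) _)
        (mainV hp1 hpmono hc0 hr3 hpc k m a b y hno hlen) (hp1 k)
    · intro k m a b x hno hlen hx
      have hcongr : ∑ i ∈ Finset.range m, |F r c (x i) (b i) - F r c (x i) (a i)| ^ p k
          = ∑ i ∈ Finset.range m, |F r c (b i) (x i) - F r c (a i) (x i)| ^ p k := by
        apply Finset.sum_congr rfl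
        intro i _
        rw [F_symm (x i) (b i), F_symm (x i) (a i)]
      rw [hcongr]
      exact root_le (Finset.sum_nonneg fun i _ => Real.rpow_nonneg (abs_nonneg _) _)
        (mainV hp1 hpmono hc0 hr3 hpc k m a b x hno hlen) (hp1 k)
  obtain ⟨M, hM1, _⟩ := hincl (F r c) (fun x y => F_per x y) hBV
  obtain ⟨n, hn⟩ := exists_nat_ge M
  set e : ℝ := 2⁻¹ ^ (r n + c n) with hedef
  have he0 : 0 < e := by rw [hedef]; positivity
  set aa : ℕ → ℝ := fun j => site r c n j - e/2 with haa
  set bb : ℕ → ℝ := fun j => site r c n j with hbb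
  have hkey : ∀ i' j', i' < c n → j' < c n → i' < j' →
      site r c n i' + e/2 ≤ site r c n j' - e/2 := by
    intro i' j' hi' hj' hlt
    have hdiff : site r c n j' - site r c n i' = ((j':ℝ) - i') * e := by
      unfold site
      rw [Nat.mod_eq_of_lt hi', Nat.mod_eq_of_lt hj', hedef]
      ring
    have h1 : (1:ℝ) ≤ (j':ℝ) - i' := by
      have : (i':ℝ) + 1 ≤ j' := by exact_mod_cast hlt
      linarith
    nlinarith
  have hno : Nonoverlap (c n) aa bb := by
    constructor
    · intro j hj
      obtain ⟨hs0, hs1⟩ := site_mem hc0 hr3 n j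
      have hge := site_ge (r := r) (c := c) n j
      have hp0 : (0:ℝ) < 2⁻¹ ^ (n+1) := by positivity
      have hge' : 2⁻¹ ^ (n+1) + e ≤ site r c n j := by rw [hedef]; exact hge
      refine ⟨?_, by simp only [haa, hbb]; linarith, le_of_lt hs1⟩
      simp only [haa]
      linarith
    · intro i hi j hj hij
      rcases lt_or_gt_of_ne hij with hlt | hgt
      · apply Set.eq_empty_iff_forall_notMem.2
        rintro z ⟨⟨_, hz1⟩, ⟨hz2, _⟩⟩
        simp only [haa, hbb] at hz1 hz2
        have := hkey i j hi hj hlt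
        linarith
      · apply Set.eq_empty_iff_forall_notMem.2
        rintro z ⟨⟨hz1, _⟩, ⟨_, hz2⟩⟩
        simp only [haa, hbb] at hz1 hz2
        have := hkey j i hj hi hgt
        linarith
  have hy : ∀ j < c n, bb j ∈ Set.Icc (0:ℝ) 1 := by
    intro j hj
    obtain ⟨hs0, hs1⟩ := site_mem hc0 hr3 n j
    exact ⟨hs0.le, hs1.le⟩
  have hsumval : ∑ j ∈ Finset.range (c n), |F r c (bb j) (bb j) - F r c (aa j) (bb j)| / lam j
      = ∑ j ∈ Finset.range (c n), 2⁻¹^(n+1) * (1 / lam j) := by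
    apply Finset.sum_congr rfl
    intro j hj
    obtain ⟨hs0, hs1⟩ := site_mem hc0 hr3 n j
    have hge := site_ge (r := r) (c := c) n j
    have hp0 : (0:ℝ) < 2⁻¹ ^ (n+1) := by positivity
    have hf1 : F r c (bb j) (bb j) = 2⁻¹ ^ (n+1) := by
      unfold F
      rw [if_pos rfl]
      simp only [hbb]
      rw [Int.fract_eq_self.2 ⟨hs0.le, hs1⟩, g_site hc0 hr3]
    have hge' : 2⁻¹ ^ (n+1) + e ≤ site r c n j := by rw [hedef]; exact hge
    have haj0 : 0 ≤ aa j := by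
      simp only [haa]; linarith
    have haj1 : aa j < 1 := by simp only [haa]; linarith
    have hf2 : F r c (aa j) (bb j) = 0 := by
      unfold F
      rw [if_neg]
      rw [Int.fract_eq_self.2 ⟨haj0, haj1⟩]
      simp only [hbb]
      rw [Int.fract_eq_self.2 ⟨hs0.le, hs1⟩]
      simp only [haa]
      intro hcon
      have : e/2 = 0 := by linarith
      linarith
    rw [hf1, hf2, sub_zero, abs_of_pos hp0, div_eq_mul_one_div]
  have hup := hM1 (c n) aa bb bb hno hy
  rw [hsumval, ← Finset.mul_sum] at hup
  have h1 : ((n:ℝ)+1) * 2^(n+1) ≤ ∑ j ∈ Finset.range (c n), 1/lam j := hcS n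
  have h2 : ((2:ℝ)⁻¹)^(n+1) * (((n:ℝ)+1) * 2^(n+1)) = (n:ℝ)+1 := by
    rw [inv_pow]
    field_simp
  have h3 : ((n:ℝ)+1) ≤ 2⁻¹^(n+1) * ∑ j ∈ Finset.range (c n), 1/lam j := by
    calc ((n:ℝ)+1) = 2⁻¹^(n+1) * (((n:ℝ)+1) * 2^(n+1)) := h2.symm
      _ ≤ 2⁻¹^(n+1) * ∑ j ∈ Finset.range (c n), 1/lam j :=
          mul_le_mul_of_nonneg_left h1 (by positivity)
  linarith
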